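/- For the Hasse–Schmidt operators D₁, D₂ on ⋀M_n and any indices i₁ < i₂ < i₃, for each m ≥ 0: D₂^m(ε^{i₁}∧ε^{i₂}∧ε^{i₃}) = Σ_{μ∈p₄(m)} (m!/(μ₁!μ₂!μ₃!μ₄!)) · D₁^{μ₁}(ε^{i₁+μ₁} ∧ ε^{i₂+μ₂+2μ₄} ∧ ε^{i₃+2μ₃+μ₂}). -/

import Mathlib

set_option maxHeartbeats 1000000

open ExteriorAlgebra

lemma my_multinomial_pascal {k : ℕ} (ν : Fin k → ℕ) (h : 0 < ∑ t, ν t) :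
    ∑ t : Fin k, (if ν t ≠ 0 then
        Nat.multinomial Finset.univ (Function.update ν t (ν t - 1)) else 0)
      = Nat.multinomial Finset.univ ν := by
  have hP : 0 < ∏ t : Fin k, (ν t).factorial :=
    Finset.prod_pos fun t _ => Nat.factorial_pos _
  refine Nat.eq_of_mul_eq_mul_right hP ?_
  have hrhs : Nat.multinomial Finset.univ ν * ∏ t : Fin k, (ν t).factorial
      = (∑ t, ν t).factorial := by
    rw [mul_comm]; exact Nat.multinomial_spec _ _
  rw [hrhs, Finset.sum_mul]
  have key : ∀ t : Fin k,
      (if ν t ≠ 0 then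
        Nat.multinomial Finset.univ (Function.update ν t (ν t - 1)) else 0)
        * ∏ s : Fin k, (ν s).factorial
      = ν t * ((∑ s, ν s) - 1).factorial := by
    intro t
    by_cases h0 : ν t = 0
    · simp [h0]
    · rw [if_pos h0]
      set ν' := Function.update ν t (ν t - 1) with hν'
      have hprod : ∏ s : Fin k, (ν s).factorial
          = ν t * ∏ s : Fin k, (ν' s).factorial := by
        rw [← Finset.prod_erase_mul Finset.univ _ (Finset.mem_univ t),
            ← Finset.prod_erase_mul Finset.univ (fun s => (ν' s).factorial) (Finset.mem_univ t)]
        have : ∀ s ∈ Finset.univ.erase t, (ν' s).factorial = (ν s).factorial := by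
          intro s hs
          rw [hν', Function.update_of_ne (Finset.ne_of_mem_erase hs)]
        rw [Finset.prod_congr rfl this]
        have : (ν t).factorial = ν t * (ν' t).factorial := by
          obtain ⟨w, hw⟩ := Nat.exists_eq_succ_of_ne_zero h0
          rw [hν', Function.update_self, hw]
          simp [Nat.factorial_succ]
        rw [this]; ring
      have hsum : ∑ s, ν' s = (∑ s, ν s) - 1 := by
        have h1 : ∑ s, ν' s = ν' t + ∑ s ∈ Finset.univ.erase t, ν' s := by
          rw [← Finset.add_sum_erase Finset.univ _ (Finset.mem_univ t)]
        have h2 : ∑ s, ν s = ν t + ∑ s ∈ Finset.univ.erase t, ν s := by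
          rw [← Finset.add_sum_erase Finset.univ _ (Finset.mem_univ t)]
        have h3 : ∑ s ∈ Finset.univ.erase t, ν' s = ∑ s ∈ Finset.univ.erase t, ν s :=
          Finset.sum_congr rfl fun s hs => by
            rw [hν', Function.update_of_ne (Finset.ne_of_mem_erase hs)]
        have h4 : ν' t = ν t - 1 := by rw [hν', Function.update_self]
        omega
      rw [hprod, ← mul_assoc, mul_comm _ (ν t), mul_assoc, mul_comm (Nat.multinomial _ _),
        Nat.multinomial_spec, hsum]
  rw [Finset.sum_congr rfl fun t _ => key t, ← Finset.sum_mul]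
  obtain ⟨w, hw⟩ := Nat.exists_eq_succ_of_ne_zero h.ne'
  rw [hw]
  simp [Nat.factorial_succ]

lemma my_pascal_step {N : Type*} [AddCommMonoid N] (k m : ℕ) (g : (Fin k → ℕ) → N) :
    ∑ ν ∈ Finset.Nat.antidiagonalTuple k m, ∑ t : Fin k,
        Nat.multinomial Finset.univ ν • g (Function.update ν t (ν t + 1))
      = ∑ ν ∈ Finset.Nat.antidiagonalTuple k (m + 1),
          Nat.multinomial Finset.univ ν • g ν := by
  rw [Finset.sum_comm]
  have key : ∀ t : Fin k,
      ∑ ν ∈ Finset.Nat.antidiagonalTuple k m,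
          Nat.multinomial Finset.univ ν • g (Function.update ν t (ν t + 1))
      = ∑ ν ∈ (Finset.Nat.antidiagonalTuple k (m + 1)).filter (fun ν => ν t ≠ 0),
          Nat.multinomial Finset.univ (Function.update ν t (ν t - 1)) • g ν := by
    intro t
    refine Finset.sum_nbij' (fun ν => Function.update ν t (ν t + 1))
      (fun ν => Function.update ν t (ν t - 1)) ?_ ?_ ?_ ?_ ?_
    · intro ν hν
      rw [Finset.Nat.mem_antidiagonalTuple] at hν
      rw [Finset.mem_filter, Finset.Nat.mem_antidiagonalTuple]
      refine ⟨?_, by simp⟩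
      rw [Finset.sum_update_of_mem (Finset.mem_univ t),
        Finset.sdiff_singleton_eq_erase]
      rw [← Finset.add_sum_erase Finset.univ ν (Finset.mem_univ t)] at hν
      omega
    · intro ν hν
      rw [Finset.mem_filter, Finset.Nat.mem_antidiagonalTuple] at hν
      rw [Finset.Nat.mem_antidiagonalTuple,
        Finset.sum_update_of_mem (Finset.mem_univ t), Finset.sdiff_singleton_eq_erase]
      rw [← Finset.add_sum_erase Finset.univ ν (Finset.mem_univ t)] at hν
      have := hν.2
      omega
    · intro ν _
      simp [Function.update_idem]
    · intro ν hν
      rw [Finset.mem_filter] at hν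
      have h2 := hν.2
      simp only [Function.update_idem, Function.update_self]
      rw [show ν t - 1 + 1 = ν t by omega]
      exact Function.update_eq_self t ν
    · intro ν _
      congr 1
      simp only [Function.update_idem, Function.update_self, Nat.add_sub_cancel]
      rw [Function.update_eq_self]
  rw [Finset.sum_congr rfl fun t _ => key t]
  have key2 : ∀ t : Fin k,
      ∑ ν ∈ (Finset.Nat.antidiagonalTuple k (m + 1)).filter (fun ν => ν t ≠ 0),
          Nat.multinomial Finset.univ (Function.update ν t (ν t - 1)) • g ν
      = ∑ ν ∈ Finset.Nat.antidiagonalTuple k (m + 1),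
          (if ν t ≠ 0 then
            Nat.multinomial Finset.univ (Function.update ν t (ν t - 1)) else 0) • g ν := by
    intro t
    rw [Finset.sum_filter]
    refine Finset.sum_congr rfl fun ν _ => ?_
    split <;> simp
  rw [Finset.sum_congr rfl fun t _ => key2 t, Finset.sum_comm]
  refine Finset.sum_congr rfl fun ν hν => ?_
  rw [← Finset.sum_smul, my_multinomial_pascal]
  rw [Finset.Nat.mem_antidiagonalTuple] at hν
  omega

section
variable {M : Type*} [AddCommGroup M] [Module ℤ M] (ε : ℕ → M)
  (D : ℕ → Module.End ℤ (ExteriorAlgebra ℤ M))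
  (hLeib : ∀ (h : ℕ) (p q : ExteriorAlgebra ℤ M),
      D h (p * q) = ∑ x ∈ Finset.HasAntidiagonal.antidiagonal h, D x.1 p * D x.2 q)
  (hinit : ∀ l i : ℕ, 1 ≤ i → D l (ι ℤ (ε i)) = ι ℤ (ε (i + l)))

local notation "T" => fun a b c => ι ℤ (ε a) * ι ℤ (ε b) * ι ℤ (ε c)

include hLeib hinit in
lemma my_stepD1 {a b c : ℕ} (ha : 1 ≤ a) (hb : 1 ≤ b) (hc : 1 ≤ c) :
    D 1 (T a b c) = T (a+1) b c + T a (b+1) c + T a b (c+1) := by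
  have h1 : (Finset.HasAntidiagonal.antidiagonal 1 : Finset (ℕ × ℕ)) = {(0,1),(1,0)} := rfl
  have h0 : (Finset.HasAntidiagonal.antidiagonal 0 : Finset (ℕ × ℕ)) = {(0,0)} := rfl
  simp only [hLeib, h1, h0, Finset.sum_insert, Finset.sum_singleton,
    Finset.mem_singleton, Finset.mem_insert, hinit _ _ ha, hinit _ _ hb, hinit _ _ hc,
    Prod.mk.injEq, and_false, not_false_eq_true, one_ne_zero, zero_ne_one, false_and]
  simp only [Nat.add_zero]
  noncomm_ring

include hLeib hinit in
lemma my_stepD2 {a b c : ℕ} (ha : 1 ≤ a) (hb : 1 ≤ b) (hc : 1 ≤ c) :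
    D 2 (T a b c) = T (a+2) b c + T a (b+2) c + T a b (c+2)
      + T (a+1) (b+1) c + T (a+1) b (c+1) + T a (b+1) (c+1) := by
  have h2 : (Finset.HasAntidiagonal.antidiagonal 2 : Finset (ℕ × ℕ)) = {(0,2),(1,1),(2,0)} := rfl
  have h1 : (Finset.HasAntidiagonal.antidiagonal 1 : Finset (ℕ × ℕ)) = {(0,1),(1,0)} := rfl
  have h0 : (Finset.HasAntidiagonal.antidiagonal 0 : Finset (ℕ × ℕ)) = {(0,0)} := rfl
  simp only [hLeib, h2, h1, h0, Finset.sum_insert, Finset.sum_singleton,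
    Finset.mem_singleton, Finset.mem_insert, hinit _ _ ha, hinit _ _ hb, hinit _ _ hc,
    Prod.mk.injEq, and_false, not_false_eq_true, one_ne_zero, zero_ne_one, false_and,
    OfNat.ofNat_ne_zero, OfNat.ofNat_ne_one, OfNat.one_ne_ofNat, OfNat.zero_ne_ofNat,
    false_or, or_false]
  simp only [Nat.add_zero]
  noncomm_ring

include hLeib hinit in
lemma my_D1pow {a b c : ℕ} (ha : 1 ≤ a) (hb : 1 ≤ b) (hc : 1 ≤ c) (s : ℕ) :
    (D 1 ^ s) (T a b c) = ∑ κ ∈ Finset.Nat.antidiagonalTuple 3 s,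
      Nat.multinomial Finset.univ κ • T (a + κ 0) (b + κ 1) (c + κ 2) := by
  induction s with
  | zero => simp [Finset.Nat.antidiagonalTuple_zero_right, Nat.multinomial]
  | succ s ih =>
    rw [pow_succ', Module.End.mul_apply, ih, map_sum,
      ← my_pascal_step 3 s (fun κ => T (a + κ 0) (b + κ 1) (c + κ 2))]
    refine Finset.sum_congr rfl fun κ _ => ?_
    rw [map_nsmul, my_stepD1 ε D hLeib hinit (le_add_right ha) (le_add_right hb)
      (le_add_right hc), Fin.sum_univ_three]
    simp only [Function.update_apply, show ((2:Fin 3) = 0) = False by decide,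
      show ((2:Fin 3) = 1) = False by decide, show ((0:Fin 3) = 2) = False by decide,
      show ((1:Fin 3) = 2) = False by decide, show ((1:Fin 3) = 0) = False by decide,
      show ((0:Fin 3) = 1) = False by decide, if_false, if_true,
      show ((0:Fin 3) = 0) = True by decide, show ((1:Fin 3) = 1) = True by decide,
      show ((2:Fin 3) = 2) = True by decide]
    simp only [smul_add, add_assoc]

include hLeib hinit in
lemma my_D2pow {a b c : ℕ} (ha : 1 ≤ a) (hb : 1 ≤ b) (hc : 1 ≤ c) (m : ℕ) :
    (D 2 ^ m) (T a b c) = ∑ ν ∈ Finset.Nat.antidiagonalTuple 6 m,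
      Nat.multinomial Finset.univ ν •
        T (a + 2 * ν 0 + ν 3 + ν 4) (b + 2 * ν 1 + ν 3 + ν 5) (c + 2 * ν 2 + ν 4 + ν 5) := by
  induction m with
  | zero => simp [Finset.Nat.antidiagonalTuple_zero_right, Nat.multinomial]
  | succ m ih =>
    rw [pow_succ', Module.End.mul_apply, ih, map_sum,
      ← my_pascal_step 6 m (fun ν =>
        T (a + 2 * ν 0 + ν 3 + ν 4) (b + 2 * ν 1 + ν 3 + ν 5) (c + 2 * ν 2 + ν 4 + ν 5))]
    refine Finset.sum_congr rfl fun ν _ => ?_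
    have ha' : 1 ≤ a + 2 * ν 0 + ν 3 + ν 4 := by omega
    have hb' : 1 ≤ b + 2 * ν 1 + ν 3 + ν 5 := by omega
    have hc' : 1 ≤ c + 2 * ν 2 + ν 4 + ν 5 := by omega
    rw [map_nsmul, my_stepD2 ε D hLeib hinit ha' hb' hc', Fin.sum_univ_six]
    simp (config := { decide := true }) only [Function.update_apply, if_true, if_false]
    simp only [smul_add, Nat.mul_add, Nat.mul_one, add_assoc]
    simp only [Nat.add_comm, Nat.add_left_comm, Nat.add_assoc]

end

lemma my_coeff (μ : Fin 4 → ℕ) (κ : Fin 3 → ℕ) (h : κ 0 + κ 1 + κ 2 = μ 0) :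
    Nat.multinomial Finset.univ μ * Nat.multinomial Finset.univ κ
      = Nat.multinomial Finset.univ ![κ 0, μ 3, μ 2, κ 1, κ 2, μ 1] := by
  have hκ := Nat.multinomial_spec Finset.univ κ
  rw [Fin.prod_univ_three (fun i => (κ i).factorial), Fin.sum_univ_three, h] at hκ
  have hμ := Nat.multinomial_spec Finset.univ μ
  rw [Fin.prod_univ_four (fun i => (μ i).factorial), Fin.sum_univ_four] at hμ
  have hν := Nat.multinomial_spec Finset.univ ![κ 0, μ 3, μ 2, κ 1, κ 2, μ 1]
  rw [Fin.prod_univ_six (fun i => ((![κ 0, μ 3, μ 2, κ 1, κ 2, μ 1]) i).factorial),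
    Fin.sum_univ_six] at hν
  simp only [show (![κ 0, μ 3, μ 2, κ 1, κ 2, μ 1] : Fin 6 → ℕ) 0 = κ 0 from rfl,
    show (![κ 0, μ 3, μ 2, κ 1, κ 2, μ 1] : Fin 6 → ℕ) 1 = μ 3 from rfl,
    show (![κ 0, μ 3, μ 2, κ 1, κ 2, μ 1] : Fin 6 → ℕ) 2 = μ 2 from rfl,
    show (![κ 0, μ 3, μ 2, κ 1, κ 2, μ 1] : Fin 6 → ℕ) 3 = κ 1 from rfl,
    show (![κ 0, μ 3, μ 2, κ 1, κ 2, μ 1] : Fin 6 → ℕ) 4 = κ 2 from rfl,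
    show (![κ 0, μ 3, μ 2, κ 1, κ 2, μ 1] : Fin 6 → ℕ) 5 = μ 1 from rfl] at hν
  set P := (κ 0).factorial * (μ 3).factorial * (μ 2).factorial * (κ 1).factorial
    * (κ 2).factorial * (μ 1).factorial with hP
  have hPpos : 0 < P := by positivity
  refine Nat.eq_of_mul_eq_mul_left hPpos ?_
  have e1 : P * (Nat.multinomial Finset.univ μ * Nat.multinomial Finset.univ κ)
      = ((μ 1).factorial * (μ 2).factorial * (μ 3).factorial *
          Nat.multinomial Finset.univ μ) *
        ((κ 0).factorial * (κ 1).factorial * (κ 2).factorial *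
          Nat.multinomial Finset.univ κ) := by rw [hP]; ring
  rw [e1, hκ]
  have e2 : (μ 1).factorial * (μ 2).factorial * (μ 3).factorial *
        Nat.multinomial Finset.univ μ * (μ 0).factorial
      = (μ 0).factorial * (μ 1).factorial * (μ 2).factorial * (μ 3).factorial *
        Nat.multinomial Finset.univ μ := by ring
  rw [e2, hμ, hP]
  rw [hν]
  congr 1
  omega

open ExteriorAlgebra in
/-- Proposition 4.3 (i): for the Hasse–Schmidt operators on `⋀M_n`,
`D₂^m(ε^{i₁}∧ε^{i₂}∧ε^{i₃}) = Σ_{μ∈p₄(m)} (m!/(μ₁!μ₂!μ₃!μ₄!))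
  D₁^{μ₁}(ε^{i₁+μ₁} ∧ ε^{i₂+μ₂+2μ₄} ∧ ε^{i₃+2μ₃+μ₂})`. -/
theorem hasseSchmidt_D2_pow_triple (n : ℕ) (M : Type*) [AddCommGroup M]
    [Module ℤ M] (ε : ℕ → M) (hε : ∀ m : ℕ, n < m → ε m = 0)
    (D : ℕ → Module.End ℤ (ExteriorAlgebra ℤ M))
    (hD0 : D 0 = 1)
    (hLeib : ∀ (h : ℕ) (p q : ExteriorAlgebra ℤ M),
      D h (p * q) = ∑ x ∈ Finset.HasAntidiagonal.antidiagonal h, D x.1 p * D x.2 q)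
    (hinit : ∀ l i : ℕ, 1 ≤ i → D l (ι ℤ (ε i)) = ι ℤ (ε (i + l)))
    (m i₁ i₂ i₃ : ℕ) (h1 : 1 ≤ i₁) (h12 : i₁ < i₂) (h23 : i₂ < i₃) :
    (D 2 ^ m) (ι ℤ (ε i₁) * ι ℤ (ε i₂) * ι ℤ (ε i₃)) =
      ∑ μ ∈ Finset.Nat.antidiagonalTuple 4 m,
        (Nat.multinomial Finset.univ μ) •
          (D 1 ^ (μ 0))
            (ι ℤ (ε (i₁ + μ 0)) * ι ℤ (ε (i₂ + μ 1 + 2 * μ 3)) *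
              ι ℤ (ε (i₃ + 2 * μ 2 + μ 1))) := by
  have hb1 : 1 ≤ i₂ := by omega
  have hc1 : 1 ≤ i₃ := by omega
  rw [my_D2pow ε D hLeib hinit h1 hb1 hc1 m]
  have hRHS : ∑ μ ∈ Finset.Nat.antidiagonalTuple 4 m,
        (Nat.multinomial Finset.univ μ) •
          (D 1 ^ (μ 0))
            (ι ℤ (ε (i₁ + μ 0)) * ι ℤ (ε (i₂ + μ 1 + 2 * μ 3)) *
              ι ℤ (ε (i₃ + 2 * μ 2 + μ 1)))
      = ∑ μ ∈ Finset.Nat.antidiagonalTuple 4 m,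
          ∑ κ ∈ Finset.Nat.antidiagonalTuple 3 (μ 0),
            (Nat.multinomial Finset.univ μ * Nat.multinomial Finset.univ κ) •
              (ι ℤ (ε (i₁ + μ 0 + κ 0)) * ι ℤ (ε (i₂ + μ 1 + 2 * μ 3 + κ 1)) *
                ι ℤ (ε (i₃ + 2 * μ 2 + μ 1 + κ 2))) := by
    refine Finset.sum_congr rfl fun μ _ => ?_
    rw [my_D1pow ε D hLeib hinit (by omega) (by omega) (by omega) (μ 0),
      Finset.smul_sum]
    exact Finset.sum_congr rfl fun κ _ => smul_smul _ _ _
  rw [hRHS, Finset.sum_sigma']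
  refine (Finset.sum_nbij'
    (fun x => ![x.2 0, x.1 3, x.1 2, x.2 1, x.2 2, x.1 1])
    (fun ν => ⟨![ν 0 + ν 3 + ν 4, ν 5, ν 2, ν 1], ![ν 0, ν 3, ν 4]⟩)
    ?_ ?_ ?_ ?_ ?_).symm
  · rintro ⟨μ, κ⟩ hx
    rw [Finset.mem_sigma, Finset.Nat.mem_antidiagonalTuple,
      Finset.Nat.mem_antidiagonalTuple] at hx
    rw [Fin.sum_univ_four] at hx
    rw [Fin.sum_univ_three] at hx
    dsimp only at hx
    rw [Finset.Nat.mem_antidiagonalTuple, Fin.sum_univ_six]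
    simp only [Matrix.cons_val_zero, Matrix.cons_val_one, Matrix.head_cons]
    show κ 0 + μ 3 + μ 2 + κ 1 + κ 2 + μ 1 = m
    omega
  · intro ν hν
    rw [Finset.Nat.mem_antidiagonalTuple, Fin.sum_univ_six] at hν
    rw [Finset.mem_sigma, Finset.Nat.mem_antidiagonalTuple,
      Finset.Nat.mem_antidiagonalTuple, Fin.sum_univ_four, Fin.sum_univ_three]
    constructor
    · show ν 0 + ν 3 + ν 4 + ν 5 + ν 2 + ν 1 = m
      omega
    · show ν 0 + ν 3 + ν 4 = ν 0 + ν 3 + ν 4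
      rfl
  · rintro ⟨μ, κ⟩ hx
    rw [Finset.mem_sigma, Finset.Nat.mem_antidiagonalTuple,
      Finset.Nat.mem_antidiagonalTuple, Fin.sum_univ_three] at hx
    dsimp only at hx
    have hκ := hx.2
    refine Sigma.ext ?_ (heq_of_eq ?_)
    · funext t
      fin_cases t
      · show κ 0 + κ 1 + κ 2 = μ 0
        exact hκ
      · rfl
      · rfl
      · rfl
    · funext t
      fin_cases t <;> rfl
  · intro ν _
    funext t
    fin_cases t <;> rfl
  · rintro ⟨μ, κ⟩ hx
    rw [Finset.mem_sigma, Finset.Nat.mem_antidiagonalTuple,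
      Finset.Nat.mem_antidiagonalTuple, Fin.sum_univ_three] at hx
    dsimp only at hx
    have hκ := hx.2
    have e1 : i₁ + μ 0 + κ 0
        = i₁ + 2 * (![κ 0, μ 3, μ 2, κ 1, κ 2, μ 1] : Fin 6 → ℕ) 0
          + (![κ 0, μ 3, μ 2, κ 1, κ 2, μ 1] : Fin 6 → ℕ) 3
          + (![κ 0, μ 3, μ 2, κ 1, κ 2, μ 1] : Fin 6 → ℕ) 4 := by
      show i₁ + μ 0 + κ 0 = i₁ + 2 * κ 0 + κ 1 + κ 2
      omega
    have e2 : i₂ + μ 1 + 2 * μ 3 + κ 1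
        = i₂ + 2 * (![κ 0, μ 3, μ 2, κ 1, κ 2, μ 1] : Fin 6 → ℕ) 1
          + (![κ 0, μ 3, μ 2, κ 1, κ 2, μ 1] : Fin 6 → ℕ) 3
          + (![κ 0, μ 3, μ 2, κ 1, κ 2, μ 1] : Fin 6 → ℕ) 5 := by
      show i₂ + μ 1 + 2 * μ 3 + κ 1 = i₂ + 2 * μ 3 + κ 1 + μ 1
      omega
    have e3 : i₃ + 2 * μ 2 + μ 1 + κ 2
        = i₃ + 2 * (![κ 0, μ 3, μ 2, κ 1, κ 2, μ 1] : Fin 6 → ℕ) 2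
          + (![κ 0, μ 3, μ 2, κ 1, κ 2, μ 1] : Fin 6 → ℕ) 4
          + (![κ 0, μ 3, μ 2, κ 1, κ 2, μ 1] : Fin 6 → ℕ) 5 := by
      show i₃ + 2 * μ 2 + μ 1 + κ 2 = i₃ + 2 * μ 2 + κ 2 + μ 1
      omega
    rw [my_coeff μ κ hκ, ← e1, ← e2, ← e3]
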